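/- arXiv:2403.07854 — 2 statements merged into one kernel-verified Lean document; each statement's English description precedes it below -/
import Mathlib

section
/- With full-rank data X_f = U Σ Vᵀ (SVD with d nonzero singular values σ_1 ≥ … ≥ σ_d > 0), labels y_f = X_fᵀθ* + η_f with η_f mean-zero noise independent of X_f, and self-distillation with teacher trained on the same data (f_t = f), the expected estimation error of the student satisfies ‖E_η[θ̂_s(α,f,f) − θ*]‖² = Σ_{i=1}^d ⟨θ*, u_i⟩² (λ/(σ_i² + λ))² (1 + α σ_i²/(σ_i² + λ))². -/
open Matrix MeasureTheory

lemma stmt6_conjMul {d : ℕ} (U : Matrix (Fin d) (Fin d) ℝ) (hU : Uᵀ * U = 1)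
    (v w : Fin d → ℝ) :
    (U * diagonal v * Uᵀ) * (U * diagonal w * Uᵀ) = U * diagonal (fun i => v i * w i) * Uᵀ := by
  rw [show (U * diagonal v * Uᵀ) * (U * diagonal w * Uᵀ)
      = U * (diagonal v * (Uᵀ * U) * diagonal w) * Uᵀ by simp only [Matrix.mul_assoc]]
  rw [hU, Matrix.mul_one, diagonal_mul_diagonal]

lemma stmt6_addSmulOne {d : ℕ}
    (U : Matrix (Fin d) (Fin d) ℝ) (hU : Uᵀ * U = 1)
    (σ : Fin d → ℝ) (lam : ℝ) :
    U * diagonal (fun i => σ i ^ 2) * Uᵀ + lam • (1 : Matrix (Fin d) (Fin d) ℝ)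
      = U * diagonal (fun i => σ i ^ 2 + lam) * Uᵀ := by
  have hUUT : U * Uᵀ = 1 := by rwa [mul_eq_one_comm] at hU
  rw [show (diagonal (fun i => σ i ^ 2 + lam) : Matrix (Fin d) (Fin d) ℝ)
      = diagonal (fun i => σ i ^ 2) + lam • 1 by
    ext i j
    by_cases h : i = j <;> simp [Matrix.diagonal_apply, Matrix.one_apply, h]]
  rw [Matrix.mul_add, Matrix.add_mul, Matrix.mul_smul, Matrix.smul_mul, Matrix.mul_one, hUUT]

lemma stmt6_sumSq {d : ℕ} (U : Matrix (Fin d) (Fin d) ℝ) (hU : Uᵀ * U = 1) (w : Fin d → ℝ) :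
    ∑ j, ((U *ᵥ w) j) ^ 2 = ∑ i, (w i) ^ 2 := by
  have h1 : ∑ j, ((U *ᵥ w) j) ^ 2 = (U *ᵥ w) ⬝ᵥ (U *ᵥ w) := by
    simp [dotProduct, sq]
  have h2 : (U *ᵥ w) ⬝ᵥ (U *ᵥ w) = w ⬝ᵥ ((Uᵀ * U) *ᵥ w) := by
    rw [← Matrix.mulVec_mulVec, Matrix.dotProduct_mulVec, Matrix.mulVec_transpose,
      dotProduct_comm]
  rw [h1, h2, hU, Matrix.one_mulVec]
  simp [dotProduct, sq]

lemma stmt6_conjMulVec {d : ℕ} (U : Matrix (Fin d) (Fin d) ℝ) (g : Fin d → ℝ) (θ : Fin d → ℝ) :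
    (U * diagonal g * Uᵀ) *ᵥ θ = U *ᵥ (fun i => g i * (Uᵀ *ᵥ θ) i) := by
  have h1 : (U * diagonal g * Uᵀ) *ᵥ θ = U *ᵥ (diagonal g *ᵥ (Uᵀ *ᵥ θ)) := by
    rw [Matrix.mulVec_mulVec, Matrix.mulVec_mulVec]
  rw [h1, show (diagonal g *ᵥ (Uᵀ *ᵥ θ)) = (fun i => g i * (Uᵀ *ᵥ θ) i) from
    funext fun i => Matrix.mulVec_diagonal _ _ _]

/-- With full-rank `X_f = U Σ Vᵀ` (SVD with `d` nonzero singular values `σ_i > 0`),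
labels `y_f = X_fᵀθ* + η_f` with mean-zero noise `η_f`, and self-distillation with a
teacher trained on the same data (`f_t = f`), the expected estimation error of the
student satisfies
`‖E_η[θ̂_s(α,f,f) − θ*]‖² = Σ_i ⟨θ*,u_i⟩² (λ/(σ_i²+λ))² (1 + ασ_i²/(σ_i²+λ))²`. -/
theorem stmt6 {d Nf : ℕ} (hd : d ≤ Nf)
    {Ω : Type*} [MeasurableSpace Ω] (μ : Measure Ω) [IsProbabilityMeasure μ]
    (η : Ω → Fin Nf → ℝ)
    (hint : ∀ i, Integrable (fun ω => η ω i) μ)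
    (hmean : ∀ i, (∫ ω, η ω i ∂μ) = 0)
    (Xf : Matrix (Fin d) (Fin Nf) ℝ)
    (U : Matrix (Fin d) (Fin d) ℝ) (hU : Uᵀ * U = 1)
    (V : Matrix (Fin Nf) (Fin d) ℝ) (hV : Vᵀ * V = 1)
    (σ : Fin d → ℝ) (hσpos : ∀ i, 0 < σ i)
    (hSVD : Xf = U * Matrix.diagonal σ * Vᵀ)
    (lam α : ℝ) (hlam : 0 < lam) (hα0 : 0 ≤ α) (hα1 : α ≤ 1)
    (θstar : Fin d → ℝ)
    (A : Matrix (Fin d) (Fin d) ℝ)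
    (hA : A = Xf * Xfᵀ + lam • (1 : Matrix (Fin d) (Fin d) ℝ))
    (student : Ω → Fin d → ℝ)
    (hstudent : student = fun ω =>
      A⁻¹ *ᵥ (Xf *ᵥ ((1 - α) • (Xfᵀ *ᵥ θstar + η ω)
        + α • (Xfᵀ *ᵥ (A⁻¹ *ᵥ (Xf *ᵥ (Xfᵀ *ᵥ θstar + η ω))))))) :
    (∑ j, ((∫ ω, student ω j ∂μ) - θstar j) ^ 2)
      = ∑ i, (∑ j, θstar j * U j i) ^ 2 * (lam / (σ i ^ 2 + lam)) ^ 2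
          * (1 + α * σ i ^ 2 / (σ i ^ 2 + lam)) ^ 2 := by
  have hUUT : U * Uᵀ = 1 := by rwa [mul_eq_one_comm] at hU
  have h0 : ∀ i, σ i ^ 2 + lam ≠ 0 := fun i =>
    ne_of_gt (by positivity)
  -- S = Xf Xfᵀ
  have hS : Xf * Xfᵀ = U * diagonal (fun i => σ i ^ 2) * Uᵀ := by
    subst hSVD
    rw [show (U * diagonal σ * Vᵀ) * (U * diagonal σ * Vᵀ)ᵀ
        = U * (diagonal σ * (Vᵀ * V) * (diagonal σ)ᵀ) * Uᵀ by
      simp only [Matrix.transpose_mul, Matrix.transpose_transpose, Matrix.mul_assoc]]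
    rw [hV, Matrix.mul_one, diagonal_transpose, diagonal_mul_diagonal]
    congr 2
    funext i
    ring
  have hAeq : A = U * diagonal (fun i => σ i ^ 2 + lam) * Uᵀ := by
    rw [hA, hS, stmt6_addSmulOne U hU]
  have hAinv : A⁻¹ = U * diagonal (fun i => (σ i ^ 2 + lam)⁻¹) * Uᵀ := by
    apply Matrix.inv_eq_right_inv
    rw [hAeq, stmt6_conjMul U hU]
    rw [show (fun i => (σ i ^ 2 + lam) * (σ i ^ 2 + lam)⁻¹) = fun _ => (1:ℝ) by
      funext i; exact mul_inv_cancel₀ (h0 i)]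
    rw [diagonal_one, Matrix.mul_one, hUUT]
  -- the linear map form of the student
  set M : Matrix (Fin d) (Fin Nf) ℝ :=
    A⁻¹ * Xf * ((1 - α) • (1 : Matrix (Fin Nf) (Fin Nf) ℝ) + α • (Xfᵀ * A⁻¹ * Xf)) with hM
  have hstud : ∀ ω, student ω = (M * Xfᵀ) *ᵥ θstar + M *ᵥ η ω := by
    intro ω
    rw [hstudent]
    have : ∀ w : Fin Nf → ℝ,
        A⁻¹ *ᵥ (Xf *ᵥ ((1 - α) • w + α • (Xfᵀ *ᵥ (A⁻¹ *ᵥ (Xf *ᵥ w))))) = M *ᵥ w := by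
      intro w
      simp [hM, Matrix.add_mulVec, Matrix.smul_mulVec, Matrix.mulVec_smul,
        Matrix.mulVec_add, Matrix.mulVec_mulVec, Matrix.one_mulVec, Matrix.mul_assoc,
        Matrix.mul_add, Matrix.mul_smul, Matrix.mul_one]
    have key : (fun ω => A⁻¹ *ᵥ (Xf *ᵥ ((1 - α) • (Xfᵀ *ᵥ θstar + η ω)
        + α • (Xfᵀ *ᵥ (A⁻¹ *ᵥ (Xf *ᵥ (Xfᵀ *ᵥ θstar + η ω))))))) ω
        = M *ᵥ (Xfᵀ *ᵥ θstar + η ω) := this _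
    rw [key, Matrix.mulVec_add, Matrix.mulVec_mulVec]
  -- the mean of the student
  have hmeanstud : ∀ j, (∫ ω, student ω j ∂μ) = ((M * Xfᵀ) *ᵥ θstar) j := by
    intro j
    have heq : (fun ω => student ω j)
        = fun ω => ((M * Xfᵀ) *ᵥ θstar) j + ∑ i, M j i * η ω i := by
      funext ω
      rw [hstud ω]
      simp [Matrix.mulVec, dotProduct]
    rw [heq, integral_add (integrable_const _)
      (integrable_finset_sum _ fun i _ => (hint i).const_mul _),
      integral_finset_sum _ fun i _ => (hint i).const_mul _]
    simp only [MeasureTheory.integral_const_mul, hmean, mul_zero, Finset.sum_const_zero, add_zero]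
    simp
  -- compute M * Xfᵀ - 1 via diagonalization
  set r : Fin d → ℝ := fun i => σ i ^ 2 / (σ i ^ 2 + lam) with hr
  have hBS : A⁻¹ * (Xf * Xfᵀ) = U * diagonal r * Uᵀ := by
    rw [hAinv, hS, stmt6_conjMul U hU]
    congr 2
    funext i
    rw [hr]
    field_simp
  have hMX : M * Xfᵀ = U * diagonal (fun i => (1 - α) * r i + α * (r i * r i)) * Uᵀ := by
    have expand : M * Xfᵀ = (1 - α) • (A⁻¹ * (Xf * Xfᵀ))
        + α • ((A⁻¹ * (Xf * Xfᵀ)) * (A⁻¹ * (Xf * Xfᵀ))) := by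
      rw [hM]
      simp only [Matrix.mul_add, Matrix.add_mul, Matrix.mul_smul, Matrix.smul_mul,
        Matrix.mul_one, Matrix.mul_assoc]
    rw [expand, hBS, stmt6_conjMul U hU]
    rw [show (diagonal (fun i => (1 - α) * r i + α * (r i * r i)) : Matrix (Fin d) (Fin d) ℝ)
        = (1 - α) • diagonal r + α • diagonal (fun i => r i * r i) by
      rw [← diagonal_smul, ← diagonal_smul, ← diagonal_add]
      rfl]
    simp only [Matrix.mul_add, Matrix.add_mul, Matrix.mul_smul, Matrix.smul_mul]
  -- the bias vector
  set g : Fin d → ℝ := fun i => (1 - α) * r i + α * (r i * r i) - 1 with hg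
  have hbias : ∀ j, ((M * Xfᵀ) *ᵥ θstar) j - θstar j = ((U * diagonal g * Uᵀ) *ᵥ θstar) j := by
    intro j
    have h1 : U * diagonal g * Uᵀ = M * Xfᵀ - 1 := by
      rw [hMX, show (diagonal g : Matrix (Fin d) (Fin d) ℝ)
          = diagonal (fun i => (1 - α) * r i + α * (r i * r i)) - 1 by
        ext i j'
        by_cases h : i = j' <;> simp [Matrix.diagonal_apply, Matrix.one_apply, h, hg]]
      rw [Matrix.mul_sub, Matrix.sub_mul, Matrix.mul_one, hUUT]
    rw [h1, Matrix.sub_mulVec, Matrix.one_mulVec]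
    simp
  calc (∑ j, ((∫ ω, student ω j ∂μ) - θstar j) ^ 2)
      = ∑ j, ((U *ᵥ (fun i => g i * (Uᵀ *ᵥ θstar) i)) j) ^ 2 := by
        congr 1
        funext j
        rw [hmeanstud j, hbias j, stmt6_conjMulVec]
    _ = ∑ i, (g i * (Uᵀ *ᵥ θstar) i) ^ 2 := stmt6_sumSq U hU _
    _ = ∑ i, (∑ j, θstar j * U j i) ^ 2 * (lam / (σ i ^ 2 + lam)) ^ 2
          * (1 + α * σ i ^ 2 / (σ i ^ 2 + lam)) ^ 2 := by
        apply Finset.sum_congr rfl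
        intro i _
        have hUT : (Uᵀ *ᵥ θstar) i = ∑ j, θstar j * U j i := by
          simp [Matrix.mulVec, dotProduct, mul_comm]
        rw [hUT]
        have hgi : g i ^ 2 = (lam / (σ i ^ 2 + lam)) ^ 2
            * (1 + α * σ i ^ 2 / (σ i ^ 2 + lam)) ^ 2 := by
          rw [hg, hr]
          field_simp
          ring
        rw [mul_pow, hgi]
        ring
end

section
/- Under the self-distillation setup on the same data (f_t = f) with full-rank X_f, the squared norm of the expected estimation error ‖E_η[θ̂_s(α,f,f) − θ*]‖² is nondecreasing in α on [0,1]; in particular, self-distillation with α > 0 has bias at least as large as plain ridge regression (α = 0). -/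
open Matrix MeasureTheory

private lemma quadMono {d : ℕ} (v0 v1 : Fin d → ℝ) (h : 0 ≤ ∑ j, v0 j * v1 j) :
    MonotoneOn (fun α : ℝ => ∑ j, (v0 j + α * v1 j) ^ 2) (Set.Icc (0 : ℝ) 1) := by
  have expand : ∀ c : ℝ, ∑ j, (v0 j + c * v1 j) ^ 2
      = (∑ j, (v0 j) ^ 2) + 2 * c * (∑ j, v0 j * v1 j) + c ^ 2 * (∑ j, (v1 j) ^ 2) := by
    intro c
    rw [Finset.mul_sum, Finset.mul_sum, ← Finset.sum_add_distrib, ← Finset.sum_add_distrib]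
    exact Finset.sum_congr rfl fun j _ => by ring
  intro a ha b hb hab
  simp only [expand]
  have h1 : 0 ≤ ∑ j, (v1 j) ^ 2 := Finset.sum_nonneg fun j _ => sq_nonneg _
  have hba : 0 ≤ b - a := sub_nonneg.2 hab
  have hab' : 0 ≤ a + b := by linarith [ha.1, hb.1]
  nlinarith [mul_nonneg hba h, mul_nonneg (mul_nonneg hba hab') h1]

/-- Under self-distillation on the same data (`f_t = f`) with full-rank `X_f`, the
squared norm of the expected estimation error `‖E_η[θ̂_s(α,f,f) − θ*]‖²` is
nondecreasing in `α` on `[0,1]`; in particular self-distillation with `α > 0` has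
bias at least as large as plain ridge regression (`α = 0`). -/
theorem stmt7 {d Nf : ℕ} (hd : d ≤ Nf)
    {Ω : Type*} [MeasurableSpace Ω] (μ : Measure Ω) [IsProbabilityMeasure μ]
    (η : Ω → Fin Nf → ℝ)
    (hint : ∀ i, Integrable (fun ω => η ω i) μ)
    (hmean : ∀ i, (∫ ω, η ω i ∂μ) = 0)
    (Xf : Matrix (Fin d) (Fin Nf) ℝ) (hrank : Xf.rank = d)
    (lam : ℝ) (hlam : 0 < lam)
    (θstar : Fin d → ℝ)
    (A : Matrix (Fin d) (Fin d) ℝ)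
    (hA : A = Xf * Xfᵀ + lam • (1 : Matrix (Fin d) (Fin d) ℝ))
    (student : ℝ → Ω → Fin d → ℝ)
    (hstudent : student = fun α ω =>
      A⁻¹ *ᵥ (Xf *ᵥ ((1 - α) • (Xfᵀ *ᵥ θstar + η ω)
        + α • (Xfᵀ *ᵥ (A⁻¹ *ᵥ (Xf *ᵥ (Xfᵀ *ᵥ θstar + η ω))))))) :
    MonotoneOn (fun α => ∑ j, ((∫ ω, student α ω j ∂μ) - θstar j) ^ 2)
      (Set.Icc (0 : ℝ) 1) := by
  classical
  -- positive definiteness of A and C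
  have hBsd : (Xf * Xfᵀ).PosSemidef := by
    have := Matrix.posSemidef_self_mul_conjTranspose Xf
    rwa [Matrix.conjTranspose_eq_transpose_of_trivial] at this
  have hApd : A.PosDef := by
    rw [hA, Matrix.smul_one_eq_diagonal]
    exact Matrix.PosDef.posSemidef_add hBsd (Matrix.PosDef.diagonal fun _ => hlam)
  have hAdet : IsUnit A.det := (Matrix.isUnit_iff_isUnit_det A).1 hApd.isUnit
  have hCpd : (Xfᵀ * Xf + lam • 1).PosDef := by
    rw [Matrix.smul_one_eq_diagonal]
    have := Matrix.posSemidef_conjTranspose_mul_self Xf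
    rw [Matrix.conjTranspose_eq_transpose_of_trivial] at this
    exact Matrix.PosDef.posSemidef_add this (Matrix.PosDef.diagonal fun _ => hlam)
  obtain ⟨C, hC⟩ : ∃ C, C = Xfᵀ * Xf + lam • (1 : Matrix (Fin Nf) (Fin Nf) ℝ) := ⟨_, rfl⟩
  rw [← hC] at hCpd
  have hCdet : IsUnit C.det := (Matrix.isUnit_iff_isUnit_det C).1 hCpd.isUnit
  have hAi : A⁻¹ * A = 1 := Matrix.nonsing_inv_mul A hAdet
  have hAs : Aᵀ = A := by
    have := hApd.isHermitian
    rwa [Matrix.IsHermitian, Matrix.conjTranspose_eq_transpose_of_trivial] at this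
  have hCs : Cᵀ = C := by
    have := hCpd.isHermitian
    rwa [Matrix.IsHermitian, Matrix.conjTranspose_eq_transpose_of_trivial] at this
  have hAis : (A⁻¹)ᵀ = A⁻¹ := by rw [Matrix.transpose_nonsing_inv, hAs]
  have hCis : (C⁻¹)ᵀ = C⁻¹ := by rw [Matrix.transpose_nonsing_inv, hCs]
  -- push-through identity
  have hXC : Xf * C = A * Xf := by
    rw [hA, hC]
    simp only [Matrix.mul_add, Matrix.add_mul, Matrix.mul_smul, Matrix.smul_mul,
      Matrix.mul_one, Matrix.one_mul, Matrix.mul_assoc]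
  have hpush : A⁻¹ * Xf = Xf * C⁻¹ := by
    have h1 : A⁻¹ * Xf * C * C⁻¹ = A⁻¹ * Xf := Matrix.mul_nonsing_inv_cancel_right _ _ hCdet
    calc A⁻¹ * Xf = A⁻¹ * Xf * C * C⁻¹ := h1.symm
      _ = A⁻¹ * (Xf * C) * C⁻¹ := by rw [Matrix.mul_assoc A⁻¹ Xf C]
      _ = A⁻¹ * (A * Xf) * C⁻¹ := by rw [hXC]
      _ = Xf * C⁻¹ := by rw [Matrix.nonsing_inv_mul_cancel_left _ _ hAdet]
  have hpushT : Xfᵀ * A⁻¹ = C⁻¹ * Xfᵀ := by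
    have := congrArg Matrix.transpose hpush
    rwa [Matrix.transpose_mul, Matrix.transpose_mul, hAis, hCis] at this
  -- abbreviations
  obtain ⟨M, hM⟩ : ∃ M, M = A⁻¹ * (Xf * Xfᵀ) := ⟨_, rfl⟩
  obtain ⟨u, hu⟩ : ∃ u, u = M *ᵥ θstar := ⟨_, rfl⟩
  obtain ⟨v0, hv0⟩ : ∃ v, v = u - θstar := ⟨_, rfl⟩
  obtain ⟨v1, hv1⟩ : ∃ v, v = M *ᵥ u - u := ⟨_, rfl⟩
  -- the estimator is linear in the data
  have key : ∀ (α : ℝ) (ω : Ω),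
      student α ω = (1 - α) • ((A⁻¹ * Xf) *ᵥ (Xfᵀ *ᵥ θstar + η ω))
        + α • ((A⁻¹ * (Xf * (Xfᵀ * (A⁻¹ * Xf)))) *ᵥ (Xfᵀ *ᵥ θstar + η ω)) := by
    intro α ω
    rw [hstudent]
    simp only [Matrix.mulVec_add, Matrix.mulVec_smul, Matrix.mulVec_mulVec, ← Matrix.mul_assoc]
  -- expected value of the estimator
  have hIntEq : ∀ (α : ℝ) (j : Fin d),
      (∫ ω, student α ω j ∂μ)
        = (1 - α) * (((A⁻¹ * Xf) *ᵥ (Xfᵀ *ᵥ θstar)) j)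
          + α * (((A⁻¹ * (Xf * (Xfᵀ * (A⁻¹ * Xf)))) *ᵥ (Xfᵀ *ᵥ θstar)) j) := by
    intro α j
    have key2 : ∀ ω : Ω, student α ω j
        = (1 - α) * (∑ i, (A⁻¹ * Xf) j i * ((Xfᵀ *ᵥ θstar) i + η ω i))
          + α * (∑ i, (A⁻¹ * (Xf * (Xfᵀ * (A⁻¹ * Xf)))) j i * ((Xfᵀ *ᵥ θstar) i + η ω i)) := by
      intro ω
      rw [key α ω]
      simp [Matrix.mulVec, dotProduct]
    have hintP : ∀ (R : Matrix (Fin d) (Fin Nf) ℝ),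
        Integrable (fun ω => ∑ i, R j i * ((Xfᵀ *ᵥ θstar) i + η ω i)) μ :=
      fun R => integrable_finset_sum _ fun i _ =>
        ((integrable_const _).add (hint i)).const_mul _
    have hmeanP : ∀ (R : Matrix (Fin d) (Fin Nf) ℝ),
        (∫ ω, ∑ i, R j i * ((Xfᵀ *ᵥ θstar) i + η ω i) ∂μ)
          = (R *ᵥ (Xfᵀ *ᵥ θstar)) j := by
      intro R
      have hI : ∀ i : Fin Nf, Integrable (fun ω => R j i * ((Xfᵀ *ᵥ θstar) i + η ω i)) μ :=
        fun i => ((integrable_const _).add (hint i)).const_mul _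
      rw [integral_finset_sum _ fun i _ => hI i]
      have h2 : ∀ i, (∫ ω, R j i * ((Xfᵀ *ᵥ θstar) i + η ω i) ∂μ)
          = R j i * (Xfᵀ *ᵥ θstar) i := by
        intro i
        rw [integral_const_mul, integral_add (integrable_const _) (hint i), hmean i,
          integral_const]
        simp
      simp only [h2]
      rfl
    calc (∫ ω, student α ω j ∂μ)
        = ∫ ω, ((1 - α) * (∑ i, (A⁻¹ * Xf) j i * ((Xfᵀ *ᵥ θstar) i + η ω i))
            + α * (∑ i, (A⁻¹ * (Xf * (Xfᵀ * (A⁻¹ * Xf)))) j i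
                * ((Xfᵀ *ᵥ θstar) i + η ω i))) ∂μ :=
          integral_congr_ae (Filter.Eventually.of_forall fun ω => key2 ω)
      _ = (1 - α) * (((A⁻¹ * Xf) *ᵥ (Xfᵀ *ᵥ θstar)) j)
          + α * (((A⁻¹ * (Xf * (Xfᵀ * (A⁻¹ * Xf)))) *ᵥ (Xfᵀ *ᵥ θstar)) j) := by
          rw [integral_add ((hintP _).const_mul _) ((hintP _).const_mul _),
            integral_const_mul, integral_const_mul, hmeanP, hmeanP]
  -- identify the mean with u and M *ᵥ u
  have hPt : (A⁻¹ * Xf) *ᵥ (Xfᵀ *ᵥ θstar) = u := by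
    rw [hu, hM, Matrix.mulVec_mulVec, Matrix.mul_assoc]
  have hQt : (A⁻¹ * (Xf * (Xfᵀ * (A⁻¹ * Xf)))) *ᵥ (Xfᵀ *ᵥ θstar) = M *ᵥ u := by
    rw [hu, hM]
    simp only [Matrix.mulVec_mulVec]
    congr 1
    simp only [← Matrix.mul_assoc]
  -- reduce to a quadratic in α
  have hEq : (fun α : ℝ => ∑ j, ((∫ ω, student α ω j ∂μ) - θstar j) ^ 2)
      = fun α : ℝ => ∑ j, (v0 j + α * v1 j) ^ 2 := by
    funext α
    refine Finset.sum_congr rfl fun j _ => ?_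
    rw [hIntEq α j, hPt, hQt]
    simp only [hv0, hv1, Pi.sub_apply]
    ring
  rw [hEq]
  refine quadMono v0 v1 ?_
  -- now the positivity of the cross term
  have hv0' : v0 = (-lam) • (A⁻¹ *ᵥ θstar) := by
    have hM1 : M - 1 = (-lam) • A⁻¹ := by
      calc M - 1 = A⁻¹ * (Xf * Xfᵀ) - A⁻¹ * A := by rw [hM, hAi]
        _ = A⁻¹ * (Xf * Xfᵀ - A) := by rw [Matrix.mul_sub]
        _ = A⁻¹ * ((-lam) • 1) := by rw [hA, sub_add_cancel_left, neg_smul]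
        _ = (-lam) • A⁻¹ := by rw [Matrix.mul_smul, Matrix.mul_one]
    calc v0 = (M - 1) *ᵥ θstar := by rw [hv0, hu, Matrix.sub_mulVec, Matrix.one_mulVec]
      _ = ((-lam) • A⁻¹) *ᵥ θstar := by rw [hM1]
      _ = (-lam) • (A⁻¹ *ᵥ θstar) := Matrix.smul_mulVec _ _ _
  have hv1' : v1 = M *ᵥ v0 := by
    rw [hv1, hv0, Matrix.mulVec_sub, hu]
  -- compute the cross term
  have hdot : ∑ j, v0 j * v1 j
      = lam ^ 2 * ((A⁻¹ *ᵥ θstar) ⬝ᵥ (M * A⁻¹) *ᵥ θstar) := by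
    have h0 : ∑ j, v0 j * v1 j = v0 ⬝ᵥ v1 := rfl
    rw [h0, hv1', hv0', Matrix.mulVec_smul, smul_dotProduct, dotProduct_smul,
      Matrix.mulVec_mulVec]
    simp only [smul_eq_mul]
    ring
  -- the key matrix identity
  have hD : A⁻¹ * (M * A⁻¹) = Xf * (C⁻¹ * (C⁻¹ * (C⁻¹ * Xfᵀ))) := by
    rw [hM]
    calc A⁻¹ * ((A⁻¹ * (Xf * Xfᵀ)) * A⁻¹)
        = A⁻¹ * (A⁻¹ * (Xf * (Xfᵀ * A⁻¹))) := by simp only [Matrix.mul_assoc]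
      _ = A⁻¹ * (A⁻¹ * (Xf * (C⁻¹ * Xfᵀ))) := by rw [hpushT]
      _ = A⁻¹ * ((A⁻¹ * Xf) * (C⁻¹ * Xfᵀ)) := by simp only [Matrix.mul_assoc]
      _ = A⁻¹ * ((Xf * C⁻¹) * (C⁻¹ * Xfᵀ)) := by rw [hpush]
      _ = (A⁻¹ * Xf) * (C⁻¹ * (C⁻¹ * Xfᵀ)) := by simp only [Matrix.mul_assoc]
      _ = (Xf * C⁻¹) * (C⁻¹ * (C⁻¹ * Xfᵀ)) := by rw [hpush]
      _ = Xf * (C⁻¹ * (C⁻¹ * (C⁻¹ * Xfᵀ))) := by simp only [Matrix.mul_assoc]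
  obtain ⟨y, hy⟩ : ∃ y, y = C⁻¹ *ᵥ (Xfᵀ *ᵥ θstar) := ⟨_, rfl⟩
  have hform : (A⁻¹ *ᵥ θstar) ⬝ᵥ (M * A⁻¹) *ᵥ θstar = y ⬝ᵥ C⁻¹ *ᵥ y := by
    have h1 : A⁻¹ *ᵥ θstar = θstar ᵥ* A⁻¹ := by rw [← Matrix.vecMul_transpose, hAis]
    calc (A⁻¹ *ᵥ θstar) ⬝ᵥ (M * A⁻¹) *ᵥ θstar
        = θstar ⬝ᵥ (A⁻¹ * (M * A⁻¹)) *ᵥ θstar := by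
          rw [h1, Matrix.dotProduct_mulVec, Matrix.vecMul_vecMul, ← Matrix.dotProduct_mulVec]
      _ = θstar ⬝ᵥ (Xf * (C⁻¹ * (C⁻¹ * (C⁻¹ * Xfᵀ)))) *ᵥ θstar := by rw [hD]
      _ = (Xfᵀ *ᵥ θstar) ⬝ᵥ (C⁻¹ *ᵥ (C⁻¹ *ᵥ (C⁻¹ *ᵥ (Xfᵀ *ᵥ θstar)))) := by
          simp only [← Matrix.mulVec_mulVec]
          rw [Matrix.dotProduct_mulVec θstar Xf, ← Matrix.mulVec_transpose]
      _ = y ⬝ᵥ C⁻¹ *ᵥ y := by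
          rw [hy, Matrix.dotProduct_mulVec (Xfᵀ *ᵥ θstar) C⁻¹, ← Matrix.mulVec_transpose, hCis]
  have hy0 : 0 ≤ y ⬝ᵥ C⁻¹ *ᵥ y := by
    have := (hCpd.inv).posSemidef.dotProduct_mulVec_nonneg y
    simpa using this
  rw [hdot, hform]
  positivity
end
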